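/- Let d ≥ 1, let θ0 ∈ ℝ^d be a unit vector, and let R ≥ 0, δ ≥ 0. Then the Lebesgue measure of the slab { x ∈ ℝ^d : ‖x‖ ≤ R and |⟪x,θ0⟫| ≤ δ } is at most 2δ·V_{d−1}·R^{d−1}, where V_{d−1} denotes the Lebesgue volume of the closed unit ball of ℝ^{d−1} (with V_0 := 1). -/

import Mathlib

open MeasureTheory
open scoped RealInnerProductSpace

/-- the Lebesgue measure of the slab
`{x ∈ ℝ^d : ‖x‖ ≤ R, |⟪x,θ0⟫| ≤ δ}` is at most `2δ·V_{d−1}·R^{d−1}`, where `V_{d−1}`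
is the Lebesgue volume of the closed unit ball of `ℝ^{d−1}` (interpreted as `1` when
`d − 1 = 0`). -/
theorem slab_volume_bound {d : ℕ} (hd : 1 ≤ d)
    (θ0 : EuclideanSpace ℝ (Fin d)) (hθ0 : ‖θ0‖ = 1)
    (R δ : ℝ) (hR : 0 ≤ R) (hδ : 0 ≤ δ) :
    volume {x : EuclideanSpace ℝ (Fin d) | ‖x‖ ≤ R ∧ |⟪x, θ0⟫| ≤ δ}
      ≤ ENNReal.ofReal (2 * δ)
          * volume (Metric.closedBall (0 : EuclideanSpace ℝ (Fin (d - 1))) 1)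
          * ENNReal.ofReal (R ^ (d - 1)) := by
  obtain ⟨n, rfl⟩ : ∃ n, d = n + 1 := ⟨d - 1, by omega⟩
  simp only [Nat.add_sub_cancel]
  -- orthonormal basis extending θ0
  have hcard : Module.finrank ℝ (EuclideanSpace ℝ (Fin (n+1))) = Fintype.card (Fin (n+1)) := by
    simp
  have horth : Orthonormal ℝ (({0} : Set (Fin (n+1))).restrict fun _ => θ0) := by
    rw [orthonormal_iff_ite]
    intro i j
    have hij : i = j := Subsingleton.elim i j
    subst hij
    have h1 : (inner ℝ θ0 θ0 : ℝ) = 1 := by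
      rw [real_inner_self_eq_norm_sq, hθ0]; norm_num
    simpa [Set.restrict] using h1
  obtain ⟨b, hb⟩ := horth.exists_orthonormalBasis_extension_of_card_eq hcard
  have hb0 : b 0 = θ0 := hb 0 rfl
  have hinner : ∀ x : EuclideanSpace ℝ (Fin (n+1)), ⟪x, θ0⟫ = b.repr x 0 := by
    intro x
    rw [b.repr_apply_apply, hb0, real_inner_comm]
  set T : Set (EuclideanSpace ℝ (Fin (n+1))) := {y | ‖y‖ ≤ R ∧ |y 0| ≤ δ} with hT
  have hTclosed : IsClosed T := by
    have hc : Continuous fun y : EuclideanSpace ℝ (Fin (n+1)) => |y 0| :=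
      ((continuous_apply (0 : Fin (n+1))).comp (PiLp.continuous_ofLp 2 _)).abs
    exact (isClosed_le continuous_norm continuous_const).inter
      (isClosed_le hc continuous_const)
  have hTmeas : MeasurableSet T := hTclosed.measurableSet
  have hpre : {x : EuclideanSpace ℝ (Fin (n+1)) | ‖x‖ ≤ R ∧ |⟪x, θ0⟫| ≤ δ}
      = b.repr ⁻¹' T := by
    ext x
    simp only [Set.mem_setOf_eq, Set.mem_preimage, hT, b.repr.norm_map, hinner]
  rw [hpre, (b.measurePreserving_repr).measure_preimage hTmeas.nullMeasurableSet]
  -- move to pi measure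
  set g := ⇑(MeasurableEquiv.toLp 2 (Fin (n+1) → ℝ)) with hgdef
  have hg : MeasurePreserving g (Measure.pi fun _ => volume) volume :=
    (EuclideanSpace.volume_preserving_symm_measurableEquiv_toLp (Fin (n+1))).symm
  rw [← hg.measure_preimage hTmeas.nullMeasurableSet]
  -- split first coordinate
  set e := MeasurableEquiv.piFinSuccAbove (fun _ : Fin (n+1) => ℝ) 0 with hedef
  have he : MeasurePreserving e (Measure.pi fun _ => volume)
      ((volume : Measure ℝ).prod (Measure.pi fun _ : Fin n => volume)) :=
    MeasureTheory.measurePreserving_piFinSuccAbove (fun _ => (volume : Measure ℝ)) 0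
  set C : Set (Fin n → ℝ) :=
    (MeasurableEquiv.toLp 2 (Fin n → ℝ)) ⁻¹' (Metric.closedBall 0 R) with hCdef
  have hCmeas : MeasurableSet C :=
    (MeasurableEquiv.toLp 2 (Fin n → ℝ)).measurable measurableSet_closedBall
  have hnorm : ∀ (m : ℕ) (z : Fin m → ℝ),
      ‖(MeasurableEquiv.toLp 2 (Fin m → ℝ)) z‖
        = Real.sqrt (∑ i, z i ^ 2) := by
    intro m z
    rw [EuclideanSpace.norm_eq]
    congr 1
    refine Finset.sum_congr rfl fun i _ => ?_
    rw [Real.norm_eq_abs, sq_abs]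
    rfl
  have hsub : g ⁻¹' T ⊆ e ⁻¹' (Set.Icc (-δ) δ ×ˢ C) := by
    intro y hy
    obtain ⟨hy1, hy2⟩ := hy
    have hy2' : |y 0| ≤ δ := hy2
    constructor
    · simpa [abs_le, hedef, MeasurableEquiv.piFinSuccAbove] using hy2'
    · have key : ∑ j : Fin n, y (Fin.succAbove 0 j) ^ 2 ≤ ∑ i, y i ^ 2 := by
        have h := Fin.sum_univ_succAbove (fun i => y i ^ 2) 0
        nlinarith [sq_nonneg (y 0)]
      show (e y).2 ∈ C
      have h2 : (e y).2 = fun j => y (Fin.succAbove 0 j) := rfl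
      rw [h2]
      simp only [hCdef, Set.mem_preimage, Metric.mem_closedBall, dist_zero_right, hnorm]
      have h1 : ‖g y‖ = Real.sqrt (∑ i, y i ^ 2) := hnorm _ y
      rw [h1] at hy1
      exact (Real.sqrt_le_sqrt key).trans hy1
  calc (Measure.pi fun _ : Fin (n+1) => (volume : Measure ℝ)) (g ⁻¹' T)
      ≤ (Measure.pi fun _ : Fin (n+1) => (volume : Measure ℝ))
          (e ⁻¹' (Set.Icc (-δ) δ ×ˢ C)) := measure_mono hsub
    _ = ((volume : Measure ℝ).prod (Measure.pi fun _ : Fin n => volume))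
          (Set.Icc (-δ) δ ×ˢ C) :=
        he.measure_preimage ((measurableSet_Icc.prod hCmeas).nullMeasurableSet)
    _ = volume (Set.Icc (-δ) δ) * (Measure.pi fun _ : Fin n => volume) C :=
        Measure.prod_prod _ _
    _ = ENNReal.ofReal (2 * δ)
          * volume (Metric.closedBall (0 : EuclideanSpace ℝ (Fin n)) R) := by
        have hgn : MeasurePreserving (⇑(MeasurableEquiv.toLp 2 (Fin n → ℝ)))
            (Measure.pi fun _ : Fin n => volume) volume :=
          (EuclideanSpace.volume_preserving_symm_measurableEquiv_toLp (Fin n)).symm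
        rw [Real.volume_Icc, hCdef,
          hgn.measure_preimage measurableSet_closedBall.nullMeasurableSet]
        congr 1
        ring_nf
    _ = ENNReal.ofReal (2 * δ)
          * (ENNReal.ofReal (R ^ n)
              * volume (Metric.closedBall (0 : EuclideanSpace ℝ (Fin n)) 1)) := by
        rw [Measure.addHaar_closedBall' _ _ hR]
        simp
    _ = ENNReal.ofReal (2 * δ)
          * volume (Metric.closedBall (0 : EuclideanSpace ℝ (Fin n)) 1)
          * ENNReal.ofReal (R ^ n) := by ring
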